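/- Let η ∈ (0,1). Let Σxx ∈ ℝ^{dx×dx} and Σyy ∈ ℝ^{dy×dy} be symmetric positive definite, and let u* ∈ ℝ^{dx}, v* ∈ ℝ^{dy} satisfy u*ᵀΣxx u* = 1 and v*ᵀΣyy v* = 1. Let u ∈ ℝ^{dx}, v ∈ ℝ^{dy} be nonzero. If (1/√2)·( u*ᵀΣxx u + v*ᵀΣyy v ) / √( uᵀΣxx u + vᵀΣyy v ) ≥ 1 − η/4, then (1/2)·( u*ᵀΣxx u / √(uᵀΣxx u) + v*ᵀΣyy v / √(vᵀΣyy v) ) ≥ 1 − η. -/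

import Mathlib

open Matrix

open scoped MatrixOrder

/-- Cauchy-Schwarz for the bilinear form of a positive semidefinite matrix. -/
lemma cs_psd {n : ℕ} {S : Matrix (Fin n) (Fin n) ℝ} (hS : S.PosSemidef)
    (a b : Fin n → ℝ) :
    (a ⬝ᵥ S.mulVec b)^2 ≤ (a ⬝ᵥ S.mulVec a) * (b ⬝ᵥ S.mulVec b) := by
  have hR : (CFC.sqrt S) * (CFC.sqrt S) = S := CFC.sqrt_mul_sqrt_self S hS.nonneg
  have herm : (CFC.sqrt S).IsHermitian := (CFC.sqrt_nonneg S).posSemidef.isHermitian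
  have key : ∀ x y : Fin n → ℝ,
      x ⬝ᵥ S.mulVec y = ((CFC.sqrt S).mulVec x) ⬝ᵥ ((CFC.sqrt S).mulVec y) := by
    intro x y
    have hsymm : (CFC.sqrt S)ᵀ = (CFC.sqrt S) := by
      have := herm.eq
      rwa [Matrix.conjTranspose_eq_transpose_of_trivial] at this
    calc x ⬝ᵥ S *ᵥ y = x ⬝ᵥ ((CFC.sqrt S) * (CFC.sqrt S)) *ᵥ y := by rw [hR]
      _ = (x ᵥ* (CFC.sqrt S)) ⬝ᵥ (CFC.sqrt S) *ᵥ y := by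
          rw [← Matrix.mulVec_mulVec, Matrix.dotProduct_mulVec]
      _ = ((CFC.sqrt S) *ᵥ x) ⬝ᵥ (CFC.sqrt S) *ᵥ y := by
          congr 1
          conv_lhs => rw [← hsymm]
          rw [Matrix.vecMul_transpose]
  rw [key a b, key a a, key b b]
  have := Finset.sum_mul_sq_le_sq_mul_sq Finset.univ ((CFC.sqrt S).mulVec a) ((CFC.sqrt S).mulVec b)
  simpa [dotProduct, pow_two] using this

lemma key_poly (x y c d : ℝ) (hx0 : 0 ≤ x) (hx2 : x ≤ 2) (hy0 : 0 ≤ y) (hy2 : y ≤ 2)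
    (hc0 : 0 ≤ c) (hd0 : 0 ≤ d) (hc : c ≤ 3/4) (hd : d ≤ 3/4) (hcd : c + d ≤ 1) :
    (x + y)/8 ≤ 1 - ((1-x)*c + (1-y)*d) := by
  nlinarith [mul_nonneg (mul_nonneg (by linarith : (0:ℝ) ≤ 2-x) (by linarith : (0:ℝ) ≤ 2-y)) (by linarith : (0:ℝ) ≤ 1-c-d),
    mul_nonneg (mul_nonneg hx0 (by linarith : (0:ℝ) ≤ 2-y)) (by linarith : (0:ℝ) ≤ 3/4 + c - d),
    mul_nonneg (mul_nonneg (by linarith : (0:ℝ) ≤ 2-x) hy0) (by linarith : (0:ℝ) ≤ 3/4 + d - c),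
    mul_nonneg (mul_nonneg hx0 hy0) (by linarith : (0:ℝ) ≤ 1/2 + c + d)]

lemma scalar_step (η p q s t : ℝ) (hη0 : 0 < η) (hη1 : η < 1) (hs : 0 < s) (ht : 0 < t)
    (hp : |p| ≤ s) (hq : |q| ≤ t)
    (h : (1 / Real.sqrt 2) * ((p + q) / Real.sqrt (s^2 + t^2)) ≥ 1 - η / 4) :
    (1/2) * (p/s + q/t) ≥ 1 - η := by
  have hS2 : (0:ℝ) < s^2 + t^2 := by positivity
  set S := Real.sqrt (s^2 + t^2) with hSdef
  have hS : 0 < S := Real.sqrt_pos.2 hS2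
  have hSsq : S^2 = s^2 + t^2 := Real.sq_sqrt hS2.le
  have hr2 : (0:ℝ) < Real.sqrt 2 := by positivity
  have hr2sq : (Real.sqrt 2)^2 = 2 := Real.sq_sqrt (by norm_num)
  set c := s / (Real.sqrt 2 * S) with hcdef
  set d := t / (Real.sqrt 2 * S) with hddef
  have hc0 : 0 ≤ c := by positivity
  have hd0 : 0 ≤ d := by positivity
  have hcd2 : c^2 + d^2 = 1/2 := by
    rw [hcdef, hddef]
    field_simp
    nlinarith [hSsq, hr2sq]
  have hc : c ≤ 3/4 := by nlinarith
  have hd : d ≤ 3/4 := by nlinarith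
  have hcd : c + d ≤ 1 := by nlinarith [sq_nonneg (c - d)]
  set x := 1 - p/s with hxdef
  set y := 1 - q/t with hydef
  have hps : p ≤ s := (abs_le.1 hp).2
  have hpn : -s ≤ p := (abs_le.1 hp).1
  have hqs : q ≤ t := (abs_le.1 hq).2
  have hqn : -t ≤ q := (abs_le.1 hq).1
  have hx0 : 0 ≤ x := by rw [hxdef]; rw [sub_nonneg, div_le_one hs]; exact hps
  have hx2 : x ≤ 2 := by
    rw [hxdef]
    have : -1 ≤ p/s := by rw [neg_le, ← neg_div]; exact (div_le_one hs).2 (by linarith)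
    linarith
  have hy0 : 0 ≤ y := by rw [hydef]; rw [sub_nonneg, div_le_one ht]; exact hqs
  have hy2 : y ≤ 2 := by
    rw [hydef]
    have : -1 ≤ q/t := by rw [neg_le, ← neg_div]; exact (div_le_one ht).2 (by linarith)
    linarith
  have hg : (1-x)*c + (1-y)*d = (1 / Real.sqrt 2) * ((p + q) / S) := by
    rw [hxdef, hydef, hcdef, hddef]
    field_simp
    try ring
  have hkey := key_poly x y c d hx0 hx2 hy0 hy2 hc0 hd0 hc hd hcd
  rw [hg] at hkey
  have : (x + y)/8 ≤ η/4 := by linarith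
  have hgoal : (1/2) * (p/s + q/t) = 1 - (x+y)/2 := by rw [hxdef, hydef]; ring
  rw [hgoal]
  linarith

/-- conversion from joint alignment to separate alignment relative to
positive definite covariances `Σxx, Σyy`. -/
theorem stmt_4 {dx dy : ℕ} (η : ℝ) (hη : η ∈ Set.Ioo (0 : ℝ) 1)
    (Sxx : Matrix (Fin dx) (Fin dx) ℝ) (Syy : Matrix (Fin dy) (Fin dy) ℝ)
    (hx : Sxx.PosDef) (hy : Syy.PosDef)
    (ustar : Fin dx → ℝ) (vstar : Fin dy → ℝ)
    (hus : ustar ⬝ᵥ Sxx.mulVec ustar = 1) (hvs : vstar ⬝ᵥ Syy.mulVec vstar = 1)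
    (u : Fin dx → ℝ) (v : Fin dy → ℝ) (hu : u ≠ 0) (hv : v ≠ 0)
    (h : (1 / Real.sqrt 2) * ((ustar ⬝ᵥ Sxx.mulVec u + vstar ⬝ᵥ Syy.mulVec v) /
          Real.sqrt (u ⬝ᵥ Sxx.mulVec u + v ⬝ᵥ Syy.mulVec v)) ≥ 1 - η / 4) :
    (1/2) * (ustar ⬝ᵥ Sxx.mulVec u / Real.sqrt (u ⬝ᵥ Sxx.mulVec u)
        + vstar ⬝ᵥ Syy.mulVec v / Real.sqrt (v ⬝ᵥ Syy.mulVec v)) ≥ 1 - η := by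
  obtain ⟨hη0, hη1⟩ := hη
  have ha : 0 < u ⬝ᵥ Sxx.mulVec u := by
    have := hx.re_dotProduct_pos hu; simpa using this
  have hb : 0 < v ⬝ᵥ Syy.mulVec v := by
    have := hy.re_dotProduct_pos hv; simpa using this
  set p := ustar ⬝ᵥ Sxx.mulVec u with hpdef
  set q := vstar ⬝ᵥ Syy.mulVec v with hqdef
  have hpa : p^2 ≤ u ⬝ᵥ Sxx.mulVec u := by
    have := cs_psd hx.posSemidef ustar u; rwa [hus, one_mul] at this
  have hqb : q^2 ≤ v ⬝ᵥ Syy.mulVec v := by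
    have := cs_psd hy.posSemidef vstar v; rwa [hvs, one_mul] at this
  have hp : |p| ≤ Real.sqrt (u ⬝ᵥ Sxx.mulVec u) := by
    rw [← Real.sqrt_sq_eq_abs]; exact Real.sqrt_le_sqrt hpa
  have hq : |q| ≤ Real.sqrt (v ⬝ᵥ Syy.mulVec v) := by
    rw [← Real.sqrt_sq_eq_abs]; exact Real.sqrt_le_sqrt hqb
  exact scalar_step η p q _ _ hη0 hη1 (Real.sqrt_pos.2 ha) (Real.sqrt_pos.2 hb) hp hq
    (by rw [Real.sq_sqrt ha.le, Real.sq_sqrt hb.le]; exact h)
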